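/- For every integer l ≥ 1, the 2-adic valuation of ε_l equals −l: v_2(ε_l) = −l. In particular ε_l ≠ 0. -/

import Mathlib

open Finset

/-- The defining property of the sequence `ε`: `ε 0 = 1` and for each `l ≥ 1`,
`1/(2l+1)! = ∑_{i=1}^{l} ∑_{j₁+⋯+jᵢ=l, jₜ ≥ 1} 2^i εᵢ / ((2j₁)!⋯(2jᵢ)!)`,
the inner sum ranging over ordered `i`-tuples of positive integers summing to `l`. -/
def IsEpsilon (ε : ℕ → ℚ) : Prop :=
  ε 0 = 1 ∧ ∀ l : ℕ, 1 ≤ l →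
    (1 : ℚ) / ((2 * l + 1).factorial : ℚ) =
      ∑ i ∈ Finset.Icc 1 l,
        ∑ c ∈ (Fintype.piFinset fun _ : Fin i => Finset.Icc 1 l).filter
            (fun c => ∑ t, c t = l),
          2 ^ i * ε i / ∏ t, ((2 * c t).factorial : ℚ)

namespace EpsAux

open PowerSeries

noncomputable def B : PowerSeries ℚ := PowerSeries.mk fun j => 1 / ((2 * j + 2).factorial : ℚ)
noncomputable def A : PowerSeries ℚ := X * B
noncomputable def S : PowerSeries ℚ := PowerSeries.mk fun l => 1 / ((2 * l + 1).factorial : ℚ)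

def c : ℕ → ℚ
  | 0 => 1
  | n + 1 => -((n + 1 : ℚ) * c n) / (2 * (n + 1) + 1)

lemma c_rec (n : ℕ) : (2 * (n + 1 : ℚ) + 1) * c (n + 1) = -((n + 1 : ℚ) * c n) := by
  rw [c]
  field_simp

lemma coeff_S (l : ℕ) : coeff l S = 1 / ((2 * l + 1).factorial : ℚ) := coeff_mk _ _

lemma coeff_A (j : ℕ) : coeff j A = if j = 0 then 0 else 1 / ((2 * j).factorial : ℚ) := by
  cases j with
  | zero => simp [A]
  | succ n =>
      rw [A, coeff_succ_X_mul]
      simp [B, coeff_mk]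
      ring_nf

lemma coeff_A_pow_of_lt {l i : ℕ} (h : l < i) : coeff l (A ^ i) = 0 := by
  rw [A, mul_pow, coeff_X_pow_mul', if_neg (by omega)]

lemma coeff_A_pow_self (l : ℕ) : coeff l (A ^ l) = (1 / 2) ^ l := by
  rw [A, mul_pow]
  have := coeff_X_pow_mul (B ^ l) l 0
  simp only [zero_add] at this
  rw [this, coeff_zero_eq_constantCoeff, map_pow]
  have hB : constantCoeff B = 1 / 2 := by
    simp [B, constantCoeff_mk, Nat.factorial]
    norm_num
  rw [hB]

lemma dA : d⁄dX ℚ A = PowerSeries.C (1 / 2) * S := by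
  ext n
  rw [coeff_derivative, coeff_C_mul, coeff_A, coeff_S]
  have h2 : ((2 * (n + 1)).factorial : ℚ) = (2 * n + 2) * (2 * n + 1).factorial := by
    have : 2 * (n + 1) = (2 * n + 1) + 1 := by ring
    rw [this, Nat.factorial_succ]
    push_cast; ring
  rw [if_neg (by omega), h2]
  have h3 : ((2 * n + 1).factorial : ℚ) ≠ 0 := Nat.cast_ne_zero.2 (Nat.factorial_ne_zero _)
  field_simp

lemma constA : constantCoeff A = 0 := by simp [A]

lemma hC2 : (2 : ℚ⟦X⟧) = PowerSeries.C 2 := (map_ofNat (PowerSeries.C (R := ℚ)) 2).symm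

lemma dCmul (r : ℚ) (f : ℚ⟦X⟧) : d⁄dX ℚ (PowerSeries.C r * f) = PowerSeries.C r * d⁄dX ℚ f := by
  rw [Derivation.leibniz, derivative_C]
  simp [smul_eq_mul]

lemma d2mul (f : ℚ⟦X⟧) : d⁄dX ℚ (2 * f) = 2 * d⁄dX ℚ f := by
  rw [hC2, dCmul]

lemma h12 : (2 : ℚ⟦X⟧) * PowerSeries.C (1 / 2) = 1 := by
  rw [hC2, ← map_mul]
  norm_num

lemma R1 : 2 * (X * d⁄dX ℚ S) + S = 1 + A := by
  ext l
  rw [map_add, map_add, hC2, coeff_C_mul]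
  cases l with
  | zero =>
      simp [coeff_S, coeff_A, Nat.factorial]
  | succ n =>
      rw [coeff_succ_X_mul, coeff_derivative, coeff_S, coeff_A,
        if_neg (Nat.succ_ne_zero n), coeff_one, if_neg (Nat.succ_ne_zero n)]
      have h2 : ((2 * (n + 1) + 1).factorial : ℚ) = (2 * (n + 1) + 1) * (2 * (n + 1)).factorial := by
        rw [Nat.factorial_succ]; push_cast; ring
      have h3 : ((2 * (n + 1)).factorial : ℚ) ≠ 0 := Nat.cast_ne_zero.2 (Nat.factorial_ne_zero _)
      rw [h2]
      field_simp
      ring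

lemma R2 : X * S * S = A * A + 2 * A := by
  apply PowerSeries.derivative.ext
  · have hd : d⁄dX ℚ (X * S * S) = S * S + 2 * (X * d⁄dX ℚ S) * S := by
      rw [mul_assoc, Derivation.leibniz, Derivation.leibniz, derivative_X]
      simp only [smul_eq_mul]
      ring
    have hd2 : d⁄dX ℚ (A * A + 2 * A) = (1 + A) * S := by
      rw [map_add, d2mul, Derivation.leibniz, dA]
      simp only [smul_eq_mul]
      linear_combination (A * S + S) * h12
    rw [hd, hd2]
    linear_combination S * R1
  · simp [constA]

/-- `C` applied to the `c` sequence, as an atom for ring manipulations. -/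
noncomputable def Cc (n : ℕ) : ℚ⟦X⟧ := PowerSeries.C (c n)

lemma c_recS (n : ℕ) : (2 * ((n : ℚ⟦X⟧) + 1) + 1) * Cc (n + 1) = -(((n : ℚ⟦X⟧) + 1) * Cc n) := by
  have h : PowerSeries.C ((2 * ((n : ℚ) + 1) + 1) * c (n + 1))
      = PowerSeries.C (-(((n : ℚ) + 1) * c n)) := by
    rw [c_rec]
  rw [map_mul, map_neg, map_mul] at h
  have hn : PowerSeries.C ((n : ℚ)) = (n : ℚ⟦X⟧) := by
    rw [map_natCast]
  rw [map_add, map_add, map_mul, map_one, hn] at h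
  simpa [hC2, Cc] using h

noncomputable def G (N : ℕ) : ℚ⟦X⟧ := ∑ i ∈ range N, Cc i * A ^ i

lemma P1 (N : ℕ) : 2 * (X * d⁄dX ℚ (G N) * S) + G N * (1 + A)
    = 1 - (2 * (N : ℚ⟦X⟧) + 1) * Cc N * A ^ N := by
  induction N with
  | zero =>
      have : Cc 0 = 1 := by simp [Cc, c]
      simp [G, this]
  | succ N ih =>
      have hG : G (N + 1) = G N + Cc N * A ^ N := by
        rw [G, G, Finset.sum_range_succ]
      have hdz : d⁄dX ℚ (Cc N * A ^ N)
          = Cc N * ((N : ℚ⟦X⟧) * (A ^ (N - 1) * (PowerSeries.C (1 / 2) * S))) := by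
        rw [Cc, dCmul, Derivation.leibniz_pow, dA]
        simp only [smul_eq_mul, nsmul_eq_mul]
      have hextra : 2 * (X * d⁄dX ℚ (Cc N * A ^ N) * S) + (Cc N * A ^ N) * (1 + A)
          = (2 * (N : ℚ⟦X⟧) + 1) * Cc N * A ^ N
            - (2 * ((N : ℚ⟦X⟧) + 1) + 1) * Cc (N + 1) * A ^ (N + 1) := by
        rw [hdz]
        cases N with
        | zero =>
            have hc0 : Cc 0 = 1 := by simp [Cc, c]
            have hc1 : (3 : ℚ⟦X⟧) * Cc 1 = -1 := by
              have h31 : ((3 : ℚ) * c 1) = -1 := by norm_num [c]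
              rw [Cc, show (3 : ℚ⟦X⟧) = PowerSeries.C 3 from (map_ofNat _ 3).symm,
                ← map_mul, h31]
              simp
            simp only [Nat.cast_zero]
            linear_combination A * hc1 + A * hc0
        | succ M =>
            simp only [Nat.add_sub_cancel]
            have hAA : A ^ M * (X * S * S) = A ^ (M + 2) + 2 * A ^ (M + 1) := by
              rw [R2]; ring
            have hrec := c_recS (M + 1)
            push_cast at hrec ⊢
            linear_combination (X * Cc (M + 1) * ((M : ℚ⟦X⟧) + 1) * A ^ M * S * S) * h12
              + (Cc (M + 1) * ((M : ℚ⟦X⟧) + 1)) * hAA + (A ^ (M + 2)) * hrec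
      calc 2 * (X * d⁄dX ℚ (G (N + 1)) * S) + G (N + 1) * (1 + A)
          = (2 * (X * d⁄dX ℚ (G N) * S) + G N * (1 + A))
            + (2 * (X * d⁄dX ℚ (Cc N * A ^ N) * S) + (Cc N * A ^ N) * (1 + A)) := by
            rw [hG, map_add]
            ring
        _ = 1 - (2 * ((N + 1 : ℕ) : ℚ⟦X⟧) + 1) * Cc (N + 1) * A ^ (N + 1) := by
            rw [ih, hextra]
            push_cast
            ring

lemma coeff_X_mul_derivative (f : ℚ⟦X⟧) (l : ℕ) :
    coeff l (X * d⁄dX ℚ f) = (l : ℚ) * coeff l f := by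
  cases l with
  | zero =>
      rw [coeff_zero_eq_constantCoeff, map_mul, constantCoeff_X, zero_mul]
      simp
  | succ n =>
      rw [coeff_succ_X_mul, coeff_derivative]
      push_cast
      ring

lemma key1 {l N : ℕ} (h : l < N) : coeff l (G N * S) = if l = 0 then 1 else 0 := by
  have hCc : (2 * (N : ℚ⟦X⟧) + 1) * Cc N = PowerSeries.C ((2 * N + 1 : ℚ) * c N) := by
    rw [Cc, map_mul, map_add, map_mul, map_one, map_natCast, map_ofNat]
  have e2 : 2 * (X * d⁄dX ℚ (G N * S)) + G N * S
      = 1 - PowerSeries.C ((2 * N + 1 : ℚ) * c N) * A ^ N := by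
    rw [Derivation.leibniz]
    simp only [smul_eq_mul]
    rw [← hCc, ← P1 N]
    linear_combination (G N) * R1
  have e1 : (2 * (l : ℚ) + 1) * coeff l (G N * S)
      = coeff l (2 * (X * d⁄dX ℚ (G N * S)) + G N * S) := by
    rw [map_add, hC2, coeff_C_mul, coeff_X_mul_derivative]
    ring
  rw [e2, map_sub, coeff_C_mul, coeff_A_pow_of_lt h, mul_zero, sub_zero, coeff_one] at e1
  have hne : (2 * (l : ℚ) + 1) ≠ 0 := by positivity
  apply mul_left_cancel₀ hne
  rw [e1]
  split_ifs with h0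
  · subst h0; norm_num
  · ring

lemma piFinset_cons_sum {M : Type*} [AddCommMonoid M] (i L : ℕ) (f : (Fin (i + 1) → ℕ) → M) :
    ∑ x ∈ Fintype.piFinset (fun _ : Fin (i + 1) => Finset.Icc 1 L), f x
      = ∑ j ∈ Finset.Icc 1 L, ∑ d ∈ Fintype.piFinset (fun _ : Fin i => Finset.Icc 1 L),
          f (Fin.cons j d) := by
  rw [← Finset.sum_product']
  refine Finset.sum_nbij' (fun x => (x 0, Fin.tail x)) (fun p => Fin.cons p.1 p.2)
    ?_ ?_ ?_ ?_ ?_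
  · intro x hx
    rw [Fintype.mem_piFinset] at hx
    rw [Finset.mem_product]
    exact ⟨hx 0, by rw [Fintype.mem_piFinset]; intro t; exact hx t.succ⟩
  · intro p hp
    rw [Finset.mem_product] at hp
    rw [Fintype.mem_piFinset]
    intro t
    refine Fin.cases ?_ ?_ t
    · simpa using hp.1
    · intro m
      simp only [Fin.cons_succ]
      exact (Fintype.mem_piFinset.1 hp.2) m
  · intro x _
    exact Fin.cons_self_tail x
  · intro p _
    simp
  · intro x _
    rw [Fin.cons_self_tail]

lemma bridge (i : ℕ) : ∀ n L : ℕ, n ≤ L →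
    (∑ x ∈ (Fintype.piFinset fun _ : Fin i => Finset.Icc 1 L).filter
        (fun x => ∑ t, x t = n), ∏ t, coeff (x t) A) = coeff n (A ^ i) := by
  induction i with
  | zero =>
      intro n L _
      rw [pow_zero, coeff_one, Finset.sum_filter]
      rw [Fintype.piFinset_of_isEmpty]
      simp [eq_comm]
  | succ i ih =>
      intro n L hnL
      rw [Finset.sum_filter, piFinset_cons_sum i L
        (f := fun x => if (∑ t, x t = n) then ∏ t, coeff (x t) A else 0)]
      simp only [Fin.sum_univ_succ, Fin.prod_univ_succ, Fin.cons_zero, Fin.cons_succ]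
      have inner : ∀ j ∈ Finset.Icc 1 L,
          (∑ d ∈ Fintype.piFinset (fun _ : Fin i => Finset.Icc 1 L),
            if j + ∑ t, d t = n then coeff j A * ∏ t, coeff (d t) A else 0)
          = if j ≤ n then coeff j A * coeff (n - j) (A ^ i) else 0 := by
        intro j _
        by_cases hjn : j ≤ n
        · rw [if_pos hjn, ← ih (n - j) L (le_trans (Nat.sub_le n j) hnL),
            Finset.sum_filter, Finset.mul_sum]
          apply Finset.sum_congr rfl
          intro d _
          have hiff : (j + ∑ t, d t = n) ↔ (∑ t, d t = n - j) := by omega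
          rw [if_congr hiff rfl rfl]
          split_ifs
          · ring
          · ring
        · rw [if_neg hjn]
          apply Finset.sum_eq_zero
          intro d _
          rw [if_neg (by omega)]
      rw [Finset.sum_congr rfl inner]
      have rhs : coeff n (A ^ (i + 1))
          = ∑ j ∈ Finset.range (n + 1), coeff j A * coeff (n - j) (A ^ i) := by
        rw [pow_succ, mul_comm (A ^ i) A, coeff_mul,
          Finset.Nat.sum_antidiagonal_eq_sum_range_succ_mk]
      rw [rhs]
      rw [show ∑ j ∈ Finset.Icc 1 L, (if j ≤ n then coeff j A * coeff (n - j) (A ^ i) else 0)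
          = ∑ j ∈ Finset.Icc 1 n, (if j ≤ n then coeff j A * coeff (n - j) (A ^ i) else 0) from
        (Finset.sum_subset (Finset.Icc_subset_Icc_right hnL)
          (fun x hx hnx => by
            rw [Finset.mem_Icc] at hx hnx
            rw [if_neg (by omega)])).symm]
      rw [Finset.sum_congr rfl (fun j hj => if_pos (Finset.mem_Icc.1 hj).2)]
      apply Finset.sum_subset
      · intro x hx
        rw [Finset.mem_Icc] at hx
        rw [Finset.mem_range]
        omega
      · intro x hx hnx
        rw [Finset.mem_range] at hx
        rw [Finset.mem_Icc] at hnx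
        have : x = 0 := by omega
        subst this
        rw [coeff_A]
        simp

noncomputable def dl (ε : ℕ → ℚ) (i : ℕ) : ℚ := 2 ^ i * ε i

variable {ε : ℕ → ℚ}

lemma hS_coeff (hε : IsEpsilon ε) {l N : ℕ} (h : l < N) :
    coeff l S = ∑ i ∈ Finset.range N, dl ε i * coeff l (A ^ i) := by
  rcases Nat.eq_zero_or_pos l with rfl | hl
  · have h0 : ∑ i ∈ Finset.range N, dl ε i * coeff 0 (A ^ i) = dl ε 0 := by
      rw [Finset.sum_eq_single 0]
      · rw [pow_zero, coeff_one, if_pos rfl, mul_one]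
      · intro b _ hb
        rw [coeff_A_pow_of_lt (Nat.pos_of_ne_zero hb), mul_zero]
      · intro h0
        exact absurd (Finset.mem_range.2 (by omega)) h0
    rw [h0, coeff_S]
    simp [dl, hε.1, Nat.factorial]
  · have hid := hε.2 l hl
    have inner : ∀ i ∈ Finset.Icc 1 l,
        (∑ x ∈ (Fintype.piFinset fun _ : Fin i => Finset.Icc 1 l).filter
            (fun x => ∑ t, x t = l),
          2 ^ i * ε i / ∏ t, ((2 * x t).factorial : ℚ))
        = dl ε i * coeff l (A ^ i) := by
      intro i _
      rw [← bridge i l l le_rfl, Finset.mul_sum]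
      apply Finset.sum_congr rfl
      intro x hx
      rw [Finset.mem_filter] at hx
      have hmem := Fintype.mem_piFinset.1 hx.1
      have hco : ∀ t : Fin i, coeff (x t) A = 1 / ((2 * x t).factorial : ℚ) := by
        intro t
        have h1 := (Finset.mem_Icc.1 (hmem t)).1
        rw [coeff_A, if_neg (by omega)]
      rw [Finset.prod_congr rfl (fun t _ => hco t), Finset.prod_div_distrib,
        Finset.prod_const_one, dl]
      ring
    calc coeff l S = ∑ i ∈ Finset.Icc 1 l, dl ε i * coeff l (A ^ i) := by
          rw [coeff_S, hid]
          exact Finset.sum_congr rfl inner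
      _ = ∑ i ∈ Finset.range N, dl ε i * coeff l (A ^ i) := by
          apply Finset.sum_subset
          · intro x hx
            rw [Finset.mem_Icc] at hx
            rw [Finset.mem_range]
            omega
          · intro x hx hnx
            rw [Finset.mem_range] at hx
            rw [Finset.mem_Icc] at hnx
            rcases Nat.eq_zero_or_pos x with rfl | hx1
            · rw [pow_zero, coeff_one, if_neg (by omega), mul_zero]
            · rw [coeff_A_pow_of_lt (by omega), mul_zero]

lemma regroup (F u v : ℕ → ℚ) (l : ℕ) (hF : ∀ m, l < m → F m = 0) :
    ∑ i ∈ Finset.range (l + 1), ∑ j ∈ Finset.range (l + 1), (u i * v j) * F (i + j)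
      = ∑ n ∈ Finset.range (l + 1),
          (∑ a ∈ Finset.range (n + 1), u a * v (n - a)) * F n := by
  have rhs : ∑ n ∈ Finset.range (l + 1), (∑ a ∈ Finset.range (n + 1), u a * v (n - a)) * F n
      = ∑ n ∈ Finset.range (l + 1), ∑ a ∈ Finset.range (n + 1), (u a * v (n - a)) * F (a + (n - a)) := by
    apply Finset.sum_congr rfl
    intro n _
    rw [Finset.sum_mul]
    apply Finset.sum_congr rfl
    intro a ha
    rw [Finset.mem_range] at ha
    rw [Nat.add_sub_cancel' (by omega : a ≤ n)]
  rw [rhs, Finset.sum_range_diag_flip (l + 1) (fun a b => (u a * v b) * F (a + b))]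
  apply Finset.sum_congr rfl
  intro i hi
  rw [Finset.mem_range] at hi
  apply (Finset.sum_subset ?_ ?_).symm
  · intro j hj
    rw [Finset.mem_range] at hj ⊢
    omega
  · intro j hj hnj
    rw [Finset.mem_range] at hj hnj
    rw [hF (i + j) (by omega), mul_zero]

lemma key2 (hε : IsEpsilon ε) (l : ℕ) :
    ∑ n ∈ Finset.range (l + 1),
        (∑ a ∈ Finset.range (n + 1), c a * dl ε (n - a)) * coeff l (A ^ n)
      = if l = 0 then 1 else 0 := by
  have h1 : coeff l (G (l + 1) * S) = if l = 0 then 1 else 0 := key1 (Nat.lt_succ_self l)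
  rw [← h1, coeff_mul]
  have hGc : ∀ m, coeff m (G (l + 1)) = ∑ i ∈ Finset.range (l + 1), c i * coeff m (A ^ i) := by
    intro m
    rw [G, map_sum]
    apply Finset.sum_congr rfl
    intro i _
    rw [Cc, coeff_C_mul]
  have e1 : ∀ p ∈ Finset.HasAntidiagonal.antidiagonal l,
      coeff p.1 (G (l + 1)) * coeff p.2 S
        = ∑ i ∈ Finset.range (l + 1), ∑ j ∈ Finset.range (l + 1),
            (c i * dl ε j) * (coeff p.1 (A ^ i) * coeff p.2 (A ^ j)) := by
    intro p hp
    rw [Finset.HasAntidiagonal.mem_antidiagonal] at hp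
    rw [hGc, hS_coeff hε (show p.2 < l + 1 by omega), Finset.sum_mul_sum]
    apply Finset.sum_congr rfl
    intro i _
    apply Finset.sum_congr rfl
    intro j _
    ring
  rw [Finset.sum_congr rfl e1, Finset.sum_comm]
  have e2 : ∀ i ∈ Finset.range (l + 1),
      (∑ p ∈ Finset.HasAntidiagonal.antidiagonal l, ∑ j ∈ Finset.range (l + 1),
        (c i * dl ε j) * (coeff p.1 (A ^ i) * coeff p.2 (A ^ j)))
      = ∑ j ∈ Finset.range (l + 1), (c i * dl ε j) * coeff l (A ^ (i + j)) := by
    intro i _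
    rw [Finset.sum_comm]
    apply Finset.sum_congr rfl
    intro j _
    rw [pow_add, coeff_mul, Finset.mul_sum]
  rw [Finset.sum_congr rfl e2]
  exact (regroup (fun m => coeff l (A ^ m)) c (dl ε) l
    (fun m hm => coeff_A_pow_of_lt hm)).symm

lemma key3 (hε : IsEpsilon ε) : ∀ n, 1 ≤ n →
    ∑ a ∈ Finset.range (n + 1), c a * dl ε (n - a) = 0 := by
  intro n
  induction n using Nat.strong_induction_on with
  | _ n ih =>
    intro hn
    have h2 := key2 hε n
    rw [if_neg (by omega)] at h2
    have hz : ∀ m ∈ Finset.range (n + 1), m ≠ n →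
        (∑ a ∈ Finset.range (m + 1), c a * dl ε (m - a)) * coeff n (A ^ m) = 0 := by
      intro m hm hmn
      rw [Finset.mem_range] at hm
      rcases Nat.eq_zero_or_pos m with rfl | hm1
      · rw [pow_zero, coeff_one, if_neg (by omega), mul_zero]
      · rw [ih m (by omega) hm1, zero_mul]
    rw [Finset.sum_eq_single_of_mem n (Finset.self_mem_range_succ n) hz] at h2
    rw [coeff_A_pow_self] at h2
    have hp : ((1 : ℚ) / 2) ^ n ≠ 0 := by positivity
    exact (mul_eq_zero.1 h2).resolve_right hp

section Norms

instance : Fact (Nat.Prime 2) := ⟨Nat.prime_two⟩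

lemma pn_odd_nat (k : ℕ) (hk : k % 2 = 1) : padicNorm 2 ((k : ℚ)) = 1 :=
  (padicNorm.nat_eq_one_iff k).2 (by omega)

lemma pn_two : padicNorm 2 ((2 : ℚ)) = 2⁻¹ := by
  have := padicNorm.padicNorm_p_of_prime (p := 2)
  simpa using this

lemma pnorm_c1 : padicNorm 2 (c 1) = 1 := by
  have hc : c 1 = -(1 / 3) := by norm_num [c]
  have h3 : padicNorm 2 ((3 : ℚ)) = 1 := by
    have := pn_odd_nat 3 (by norm_num)
    simpa using this
  rw [hc, padicNorm.neg, padicNorm.div, padicNorm.one, h3]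
  norm_num

lemma pnorm_c_le : ∀ a : ℕ, 2 ≤ a → padicNorm 2 (c a) ≤ 1 / 2 := by
  intro a ha
  induction a, ha using Nat.le_induction with
  | base =>
      have hc : c 2 = 2 / 15 := by norm_num [c]
      have h15 : padicNorm 2 ((15 : ℚ)) = 1 := by
        have := pn_odd_nat 15 (by norm_num)
        simpa using this
      rw [hc, padicNorm.div, h15, pn_two]
      norm_num
  | succ a ha ih =>
      have hrec := congrArg (padicNorm 2) (c_rec a)
      rw [padicNorm.mul, padicNorm.neg, padicNorm.mul] at hrec
      have hodd : padicNorm 2 (2 * ((a : ℚ) + 1) + 1) = 1 := by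
        have : (2 * ((a : ℚ) + 1) + 1) = ((2 * (a + 1) + 1 : ℕ) : ℚ) := by push_cast; ring
        rw [this]
        exact pn_odd_nat _ (by omega)
      have hle : padicNorm 2 ((a : ℚ) + 1) ≤ 1 := by
        have : ((a : ℚ) + 1) = ((a + 1 : ℕ) : ℚ) := by push_cast; ring
        rw [this]
        exact padicNorm.of_nat _
      rw [hodd, one_mul] at hrec
      rw [hrec]
      calc padicNorm 2 ((a : ℚ) + 1) * padicNorm 2 (c a) ≤ 1 * (1 / 2) := by
            apply mul_le_mul hle ih (padicNorm.nonneg _) (by norm_num)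
        _ = 1 / 2 := by norm_num

lemma pnorm_dl {ε : ℕ → ℚ} (hε : IsEpsilon ε) : ∀ n, padicNorm 2 (dl ε n) = 1 := by
  intro n
  induction n using Nat.strong_induction_on with
  | _ n ih =>
    rcases Nat.eq_zero_or_pos n with rfl | hn
    · have : dl ε 0 = 1 := by simp [dl, hε.1]
      rw [this, padicNorm.one]
    · obtain ⟨m, rfl⟩ : ∃ m, n = m + 1 := ⟨n - 1, by omega⟩
      have h3 := key3 hε (m + 1) (by omega)
      rw [Finset.sum_range_succ' _ (m + 1), Finset.sum_range_succ' _ m] at h3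
      have hc0 : c 0 = 1 := rfl
      have hd : dl ε (m + 1)
          = -(c 1 * dl ε m + ∑ i ∈ Finset.range m, c (i + 1 + 1) * dl ε (m + 1 - (i + 1 + 1))) := by
        have hs : (m + 1 - (0 + 1)) = m := by omega
        rw [hs, hc0, one_mul] at h3
        simp only [Nat.sub_zero] at h3
        linarith [h3]
      have hT : padicNorm 2 (∑ i ∈ Finset.range m, c (i + 1 + 1) * dl ε (m + 1 - (i + 1 + 1)))
          ≤ 1 / 2 := by
        apply padicNorm.sum_le' ?_ (by norm_num)
        intro i hi
        rw [Finset.mem_range] at hi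
        rw [padicNorm.mul, ih (m + 1 - (i + 1 + 1)) (by omega)]
        calc padicNorm 2 (c (i + 1 + 1)) * 1 = padicNorm 2 (c (i + 1 + 1)) := by ring
          _ ≤ 1 / 2 := pnorm_c_le _ (by omega)
      have h1 : padicNorm 2 (c 1 * dl ε m) = 1 := by
        rw [padicNorm.mul, pnorm_c1, ih m (by omega), one_mul]
      rw [hd, padicNorm.neg, padicNorm.add_eq_max_of_ne (by rw [h1]; intro hcon; rw [← hcon] at hT; linarith),
        h1]
      rw [max_eq_left]
      linarith

end Norms

theorem padicValRat_two_epsilon' (ε : ℕ → ℚ) (hε : IsEpsilon ε) (l : ℕ) (hl : 1 ≤ l) :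
    padicValRat 2 (ε l) = -(l : ℤ) ∧ ε l ≠ 0 := by
  have hd := pnorm_dl hε l
  have hdon : dl ε l ≠ 0 := by
    intro h
    rw [h, padicNorm.zero] at hd
    norm_num at hd
  have hεne : ε l ≠ 0 := by
    intro h
    apply hdon
    rw [dl, h, mul_zero]
  refine ⟨?_, hεne⟩
  have hval0 : padicValRat 2 (dl ε l) = 0 := by
    have hz := padicNorm.eq_zpow_of_nonzero (p := 2) hdon
    rw [hd] at hz
    have h := zpow_right_injective₀ (show (0 : ℚ) < 2 by norm_num) (by norm_num)
      (show ((2 : ℚ)) ^ (-padicValRat 2 (dl ε l)) = (2 : ℚ) ^ (0 : ℤ) by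
        rw [zpow_zero]; exact hz.symm)
    omega
  have h2l : padicValRat 2 ((2 : ℚ) ^ l) = l := by
    rw [show ((2 : ℚ) ^ l) = (((2 ^ l : ℕ)) : ℚ) by push_cast; ring, padicValRat.of_nat,
      padicValNat.prime_pow]
  have heq : ε l = dl ε l / 2 ^ l := by
    rw [dl]
    field_simp
  rw [heq, padicValRat.div hdon (by positivity), hval0, h2l]
  omega

end EpsAux

theorem padicValRat_two_epsilon (ε : ℕ → ℚ) (hε : IsEpsilon ε) (l : ℕ) (hl : 1 ≤ l) :
    padicValRat 2 (ε l) = -(l : ℤ) ∧ ε l ≠ 0 :=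
  EpsAux.padicValRat_two_epsilon' ε hε l hl
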